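/- The following two identities hold in Ω²: (1 − x)(1 − q⁻² x)(1 − q⁻⁴ x) ω² = −(q⁸/(q⁴ + 1)) z⁴ (ω̄ ω + q⁴ ω ω̄) and (1 − q² x)(1 − q⁴ x)(1 − q⁶ x) ω² = −(q⁸/(q⁴ + 1)) z⁴ (ω̄ ω + q⁴ ω ω̄). -/

import Mathlib

set_option maxHeartbeats 4000000 in
theorem omega_sq_polynomial_identities
    (q : ℝ) (hq0 : 0 < q) (hq1 : q < 1)
    {A : Type*} [Ring A] [Algebra ℂ A]
    (z w : A)
    (hzw : w * z - ((q : ℂ) ^ 2) • (z * w) = ((1 : ℂ) - (q : ℂ) ^ 2) • (1 : A))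
    (x : A) (hx : x = 1 - z * w)
    (σ : A ≃ₐ[ℂ] A) (hσz : σ z = ((q : ℂ) ^ 2) • z)
    (hσw : σ w = (((q : ℂ) ^ 2)⁻¹) • w)
    (D : A →ₗ[ℂ] A)
    (hD : ∀ a b : A, D (a * b) = D a * σ b + a * D b)
    (hDz : D z = w) (hDw : D w = 0)
    (Db : A →ₗ[ℂ] A)
    (hDb : ∀ a b : A, Db (a * b) = Db a * σ b + a * Db b)
    (hDbz : Db z = 0) (hDbw : Db w = ((q : ℂ) ^ 2) • z)
    {Ω : Type*} [Ring Ω] [Algebra ℂ Ω]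
    (𝒜 : ℕ → Submodule ℂ Ω)
    (hmul : ∀ {m n : ℕ} {ξ η : Ω}, ξ ∈ 𝒜 m → η ∈ 𝒜 n → ξ * η ∈ 𝒜 (m + n))
    (ι : A →ₐ[ℂ] Ω) (hι : Function.Injective ι)
    (hι0 : ∀ a : A, ι a ∈ 𝒜 0) (hι0' : ∀ u ∈ 𝒜 0, ∃ a : A, ι a = u)
    (d : Ω →ₗ[ℂ] Ω)
    (hdeg : ∀ {n : ℕ} {ξ : Ω}, ξ ∈ 𝒜 n → d ξ ∈ 𝒜 (n + 1))
    (hdd : ∀ ξ : Ω, d (d ξ) = 0)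
    (hLeib : ∀ {n : ℕ} {ξ : Ω}, ξ ∈ 𝒜 n → ∀ η : Ω,
      d (ξ * η) = d ξ * η + ((-1 : ℂ) ^ n) • (ξ * d η))
    (ω ωb : Ω) (hω : ω ∈ 𝒜 1) (hωb : ωb ∈ 𝒜 1)
    (hωcomm : ∀ a : A, ω * ι a = ι (σ a) * ω)
    (hωbcomm : ∀ a : A, ωb * ι a = ι (σ a) * ωb)
    (hda : ∀ a : A, d (ι a) = ι (D a) * ω + ι (Db a) * ωb)
    :
    ι ((1 - x) * (1 - (((q : ℂ) ^ 2)⁻¹) • x) * (1 - (((q : ℂ) ^ 4)⁻¹) • x)) * ω ^ 2 =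
      (-((q : ℂ) ^ 8 / ((q : ℂ) ^ 4 + 1))) • (ι (z ^ 4) * (ωb * ω + ((q : ℂ) ^ 4) • (ω * ωb))) ∧
    ι ((1 - ((q : ℂ) ^ 2) • x) * (1 - ((q : ℂ) ^ 4) • x) * (1 - ((q : ℂ) ^ 6) • x)) * ω ^ 2 =
      (-((q : ℂ) ^ 8 / ((q : ℂ) ^ 4 + 1))) • (ι (z ^ 4) * (ωb * ω + ((q : ℂ) ^ 4) • (ω * ωb))) := by
  have hq : (q : ℂ) ≠ 0 := by
    simpa using (Complex.ofReal_ne_zero.mpr hq0.ne')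
  have hq2 : ((q : ℂ) ^ 2) ≠ 0 := pow_ne_zero _ hq
  have h1m : (1 - (q : ℂ) ^ 2) ≠ 0 := by
    intro h
    have h2 : ((1 - q ^ 2 : ℝ) : ℂ) = 0 := by push_cast; linear_combination h
    have h3 : (1 - q ^ 2 : ℝ) = 0 := by exact_mod_cast h2
    nlinarith
  have h41 : ((q : ℂ) ^ 4 + 1) ≠ 0 := by
    intro h
    have h2 : ((q ^ 4 + 1 : ℝ) : ℂ) = 0 := by push_cast; linear_combination h
    have h3 : (q ^ 4 + 1 : ℝ) = 0 := by exact_mod_cast h2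
    nlinarith [pow_pos hq0 4]
  -- basic commutation relations in Ω, in "for all trailing factor" form
  have cZ : ω * ι z = ((q : ℂ) ^ 2) • (ι z * ω) := by
    rw [hωcomm, hσz, map_smul, smul_mul_assoc]
  have cW : ω * ι w = (((q : ℂ) ^ 2)⁻¹) • (ι w * ω) := by
    rw [hωcomm, hσw, map_smul, smul_mul_assoc]
  have cbZ : ωb * ι z = ((q : ℂ) ^ 2) • (ι z * ωb) := by
    rw [hωbcomm, hσz, map_smul, smul_mul_assoc]
  have cZ' : ∀ t : Ω, ω * (ι z * t) = ((q : ℂ) ^ 2) • (ι z * (ω * t)) := by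
    intro t; rw [← mul_assoc, cZ, smul_mul_assoc, mul_assoc]
  have cW' : ∀ t : Ω, ω * (ι w * t) = (((q : ℂ) ^ 2)⁻¹) • (ι w * (ω * t)) := by
    intro t; rw [← mul_assoc, cW, smul_mul_assoc, mul_assoc]
  have cbZ' : ∀ t : Ω, ωb * (ι z * t) = ((q : ℂ) ^ 2) • (ι z * (ωb * t)) := by
    intro t; rw [← mul_assoc, cbZ, smul_mul_assoc, mul_assoc]
  have hWZ : ι w * ι z = ((q : ℂ) ^ 2) • (ι z * ι w) + ((1 : ℂ) - (q : ℂ) ^ 2) • 1 := by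
    have h := congrArg ι hzw
    simp only [map_sub, map_mul, map_smul, map_one] at h
    rw [sub_eq_iff_eq_add] at h
    rw [h, add_comm]
  have hWZ' : ∀ t : Ω, ι w * (ι z * t) =
      ((q : ℂ) ^ 2) • (ι z * (ι w * t)) + ((1 : ℂ) - (q : ℂ) ^ 2) • t := by
    intro t
    rw [← mul_assoc, hWZ, add_mul, smul_mul_assoc, smul_mul_assoc, one_mul, mul_assoc]
  -- d on generators
  have dZ : d (ι z) = ι w * ω := by
    rw [hda, hDz, hDbz, map_zero, zero_mul, add_zero]
  have dW : d (ι w) = ((q : ℂ) ^ 2) • (ι z * ωb) := by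
    rw [hda, hDw, hDbw, map_zero, zero_mul, zero_add, map_smul, smul_mul_assoc]
  have L0 : ∀ (a : A) (η : Ω), d (ι a * η) = d (ι a) * η + ι a * d η := by
    intro a η
    rw [hLeib (hι0 a) η, pow_zero, one_smul]
  have L1 : ∀ η : Ω, d (ω * η) = d ω * η - ω * d η := by
    intro η
    rw [hLeib hω η, pow_one, neg_one_smul, sub_eq_add_neg]
  -- E1 : ι w * d ω
  have E1 : ι w * d ω = (-((q : ℂ) ^ 2)) • (ι z * (ωb * ω)) := by
    have h0 := hdd (ι z)
    rw [dZ, L0 w ω, dW, smul_mul_assoc, mul_assoc] at h0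
    have := eq_neg_of_add_eq_zero_right h0
    rw [this, neg_smul]
  have cbo : (ωb * ω) * ι z = ((q : ℂ) ^ 4) • (ι z * (ωb * ω)) := by
    rw [mul_assoc, cZ, mul_smul_comm, cbZ', smul_smul]
    module
  have cob : (ω * ωb) * ι z = ((q : ℂ) ^ 4) • (ι z * (ω * ωb)) := by
    rw [mul_assoc, cbZ, mul_smul_comm, cZ', smul_smul]
    module
  have coo : (ω * ω) * ι z = ((q : ℂ) ^ 4) • (ι z * (ω * ω)) := by
    rw [mul_assoc, cZ, mul_smul_comm, cZ', smul_smul]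
    module
  have cooW : (ω * ω) * ι w = (((q : ℂ) ^ 4)⁻¹) • (ι w * (ω * ω)) := by
    rw [mul_assoc, cW, mul_smul_comm, cW', smul_smul]
    match_scalars
    field_simp
  -- E3
  have E3 : d ω * ι z = ((q : ℂ) ^ 2) • (ι z * d ω)
      + ((q : ℂ) ^ 2 + ((q : ℂ) ^ 2)⁻¹) • (ι w * (ω * ω)) := by
    have h := congrArg d cZ
    rw [L1, dZ, map_smul, L0, dZ, cW', sub_eq_iff_eq_add] at h
    rw [h]
    rw [smul_add, mul_assoc]
    module
  -- solve for d ω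
  have h : (ι w * d ω) * ι z = ι w * (((q : ℂ) ^ 2) • (ι z * d ω)
      + ((q : ℂ) ^ 2 + ((q : ℂ) ^ 2)⁻¹) • (ι w * (ω * ω))) := by rw [mul_assoc, E3]
  rw [E1] at h
  simp only [mul_add, mul_smul_comm, smul_mul_assoc, smul_smul, mul_assoc, mul_neg, neg_mul,
    smul_neg, cZ, cW, cbZ, cZ', cW', cbZ', hWZ', E1, smul_add] at h
  have hiso : (((q : ℂ) ^ 2) * (1 - (q : ℂ) ^ 2)) • d ω
      + ((q : ℂ) ^ 2 + ((q : ℂ) ^ 2)⁻¹) • (ι w * (ι w * (ω * ω))) = 0 := by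
    have h2 := sub_eq_zero_of_eq h.symm
    rw [← h2]
    module
  have hα : (((q : ℂ) ^ 2) * (1 - (q : ℂ) ^ 2)) ≠ 0 := mul_ne_zero hq2 h1m
  have h3 : (((q : ℂ) ^ 2) * (1 - (q : ℂ) ^ 2)) • d ω
      = (-((q : ℂ) ^ 2 + ((q : ℂ) ^ 2)⁻¹)) • (ι w * (ι w * (ω * ω))) := by
    have h4 := eq_neg_of_add_eq_zero_left hiso
    rw [h4, neg_smul]
  have hdo : d ω = (-(((q : ℂ) ^ 2 + ((q : ℂ) ^ 2)⁻¹) / (((q : ℂ) ^ 2) * (1 - (q : ℂ) ^ 2)))) •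
      (ι w * (ι w * (ω * ω))) := by
    rw [← inv_smul_smul₀ hα (d ω), h3, smul_smul]
    match_scalars
    field_simp
  -- key relation
  have h6 := congrArg d cW
  rw [L1, map_smul, L0, dW, hdo] at h6
  simp only [mul_add, mul_smul_comm, smul_mul_assoc, smul_smul, mul_assoc, mul_neg, neg_mul,
    smul_neg, cZ, cW, cbZ, cZ', cW', cbZ', hWZ', smul_add] at h6
  have h5 : (-(((q : ℂ) ^ 4 + 1) / (q : ℂ) ^ 8)) • (ι w * (ι w * (ι w * (ω * ω))))
      = ι z * (ωb * ω) + ((q : ℂ) ^ 4) • (ι z * (ω * ωb)) := by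
    have h7 := sub_eq_zero_of_eq h6
    rw [← sub_eq_zero, ← h7]
    match_scalars <;> (field_simp; try ring)
  have h41' : (-1 - (q : ℂ) ^ 4) ≠ 0 := by
    intro hcontr; apply h41; linear_combination -hcontr
  have h41'' : (-1 + -(q : ℂ) ^ 4) ≠ 0 := by
    intro hcontr; apply h41; linear_combination -hcontr
  have hγ : (-(((q : ℂ) ^ 4 + 1) / (q : ℂ) ^ 8)) ≠ 0 :=
    neg_ne_zero.mpr (div_ne_zero h41 (pow_ne_zero _ hq))
  have key : ι w * (ι w * (ι w * (ω * ω)))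
      = (-((q : ℂ) ^ 8 / ((q : ℂ) ^ 4 + 1))) • (ι z * (ωb * ω) + ((q : ℂ) ^ 4) • (ι z * (ω * ωb))) := by
    rw [← inv_smul_smul₀ hγ (ι w * (ι w * (ι w * (ω * ω)))), h5]
    match_scalars <;> (field_simp; try ring)
  -- A-side relations
  have hzwx : z * w = 1 - x := by rw [hx, sub_sub_cancel]
  have hzw2 : ∀ t : A, z * (w * t) = t - x * t := by
    intro t; rw [← mul_assoc, hzwx, sub_mul, one_mul]
  have hwzx : w * z = 1 - ((q : ℂ) ^ 2) • x := by
    have h := hzw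
    rw [sub_eq_iff_eq_add] at h
    rw [h, hzwx]
    module
  have hwz2 : ∀ t : A, w * (z * t) = t - ((q : ℂ) ^ 2) • (x * t) := by
    intro t; rw [← mul_assoc, hwzx, sub_mul, one_mul, smul_mul_assoc]
  have hxz : x * z = ((q : ℂ) ^ 2) • (z * x) := by
    calc x * z = (1 - z * w) * z := by rw [hx]
    _ = z - z * (w * z) := by rw [sub_mul, one_mul, mul_assoc]
    _ = ((q : ℂ) ^ 2) • (z * x) := by rw [hwzx, mul_sub, mul_one, mul_smul_comm, sub_sub_cancel]
  have hzx : z * x = (((q : ℂ) ^ 2)⁻¹) • (x * z) := by rw [hxz, inv_smul_smul₀ hq2]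
  have hzx2 : ∀ t : A, z * (x * t) = (((q : ℂ) ^ 2)⁻¹) • (x * (z * t)) := by
    intro t; rw [← mul_assoc, hzx, smul_mul_assoc, mul_assoc]
  have hwx : w * x = ((q : ℂ) ^ 2) • (x * w) := by
    calc w * x = w - w * (z * w) := by rw [hx, mul_sub, mul_one]
    _ = w - (1 - ((q : ℂ) ^ 2) • x) * w := by rw [← hwzx, mul_assoc]
    _ = ((q : ℂ) ^ 2) • (x * w) := by rw [sub_mul, one_mul, smul_mul_assoc, sub_sub_cancel]
  have hwx2 : ∀ t : A, w * (x * t) = ((q : ℂ) ^ 2) • (x * (w * t)) := by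
    intro t; rw [← mul_assoc, hwx, smul_mul_assoc, mul_assoc]
  have hqq : ((q:ℂ) * (q:ℂ)) ≠ 0 := mul_ne_zero hq hq
  have hqqqq : ((q:ℂ) * ((q:ℂ) * ((q:ℂ) * (q:ℂ)))) ≠ 0 :=
    mul_ne_zero hq (mul_ne_zero hq hqq)
  have hA1 : z ^ 3 * w ^ 3 = (1 - x) * (1 - (((q : ℂ) ^ 2)⁻¹) • x) * (1 - (((q : ℂ) ^ 4)⁻¹) • x) := by
    simp only [pow_succ, pow_zero, one_mul, mul_assoc, mul_sub, sub_mul, mul_one,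
      smul_sub, smul_smul, mul_smul_comm, smul_mul_assoc, hzw2, hzwx, hzx2, hzx]
    match_scalars
    all_goals (try field_simp)
    all_goals (try ring)
    all_goals (try field_simp)
    all_goals (try ring)
  have hA2 : w ^ 3 * z ^ 3 = (1 - ((q : ℂ) ^ 2) • x) * (1 - ((q : ℂ) ^ 4) • x) * (1 - ((q : ℂ) ^ 6) • x) := by
    simp only [pow_succ, pow_zero, one_mul, mul_assoc, mul_sub, sub_mul, mul_one,
      smul_sub, smul_smul, mul_smul_comm, smul_mul_assoc, hwz2, hwzx, hwx2, hwx]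
  -- final assembly helpers
  have hz3 : ι (z ^ 3) = ι z * (ι z * ι z) := by
    rw [map_pow, pow_succ, pow_succ, pow_one, mul_assoc]
  have hw3 : ι (w ^ 3) = ι w * (ι w * ι w) := by
    rw [map_pow, pow_succ, pow_succ, pow_one, mul_assoc]
  have hz4 : ι (z ^ 4) = ι z * (ι z * (ι z * ι z)) := by
    rw [map_pow, pow_succ, pow_succ, pow_succ, pow_one, mul_assoc, mul_assoc]
  constructor
  · rw [show (1 - x) * (1 - (((q : ℂ) ^ 2)⁻¹) • x) * (1 - (((q : ℂ) ^ 4)⁻¹) • x)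
        = z ^ 3 * w ^ 3 from hA1.symm]
    rw [map_mul, hz3, hw3, sq, hz4, ← sub_eq_zero]
    calc ι z * (ι z * ι z) * (ι w * (ι w * ι w)) * (ω * ω)
          - (-((q : ℂ) ^ 8 / ((q : ℂ) ^ 4 + 1))) •
            (ι z * (ι z * (ι z * ι z)) * (ωb * ω + ((q : ℂ) ^ 4) • (ω * ωb)))
        = ι z * (ι z * (ι z * (ι w * (ι w * (ι w * (ω * ω))))))
          - ι z * (ι z * (ι z * ((-((q : ℂ) ^ 8 / ((q : ℂ) ^ 4 + 1))) •
            (ι z * (ωb * ω) + ((q : ℂ) ^ 4) • (ι z * (ω * ωb)))))) := by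
          simp only [mul_add, add_mul, smul_add, mul_smul_comm, smul_mul_assoc, smul_smul,
            mul_assoc, smul_sub, sub_eq_add_neg, neg_add, neg_neg, neg_smul, smul_neg,
            mul_neg, neg_mul]
          try match_scalars
          all_goals (try field_simp)
          all_goals (try ring)
          all_goals (try field_simp)
          all_goals (try ring)
    _ = 0 := by rw [key, sub_self]
  · rw [show (1 - ((q : ℂ) ^ 2) • x) * (1 - ((q : ℂ) ^ 4) • x) * (1 - ((q : ℂ) ^ 6) • x)
        = w ^ 3 * z ^ 3 from hA2.symm]
    rw [map_mul, hz3, hw3, sq, hz4, ← sub_eq_zero]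
    calc ι w * (ι w * ι w) * (ι z * (ι z * ι z)) * (ω * ω)
          - (-((q : ℂ) ^ 8 / ((q : ℂ) ^ 4 + 1))) •
            (ι z * (ι z * (ι z * ι z)) * (ωb * ω + ((q : ℂ) ^ 4) • (ω * ωb)))
        = (((q : ℂ) ^ 12)⁻¹) •
            ((ι w * (ι w * (ι w * (ω * ω)))) * (ι z * (ι z * ι z))
            - ((-((q : ℂ) ^ 8 / ((q : ℂ) ^ 4 + 1))) •
              (ι z * (ωb * ω) + ((q : ℂ) ^ 4) • (ι z * (ω * ωb)))) * (ι z * (ι z * ι z))) := by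
          simp only [mul_add, add_mul, smul_add, mul_smul_comm, smul_mul_assoc, smul_smul,
            mul_assoc, smul_sub, sub_eq_add_neg, neg_add, neg_neg, neg_smul, smul_neg,
            mul_neg, neg_mul, cZ, cbZ, cZ', cbZ']
          try match_scalars
          all_goals (try field_simp)
          all_goals (try ring)
          all_goals (try field_simp)
          all_goals (try ring)
    _ = 0 := by rw [key, sub_self, smul_zero]
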